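/- Let S : ℕ₀ × ℕ₀ → ℤ be a function with S(g, h) = 0 for h > g + 1, and let T_S be defined by the recursion T_S(g, h) = T_S(g, h+1) + T_S(g−1, h+1) + S(g, h) for g ≥ 1, h ≥ 0, with T_S(g, h) = 0 whenever h > g + 1. Then T_S(g, h) = Σ_{x,y ≥ 0} C(y − h, g − x) · S(x, y), where C(n, k) = 0 when k < 0 or k > n. -/
import Mathlib


/-- The binomial coefficient `C(a, b)` for integer arguments, with the convention that
it is `0` when `b < 0` or `b > a`. -/
def intChoose (a b : ℤ) : ℕ :=
  if 0 ≤ b ∧ b ≤ a then a.toNat.choose b.toNat else 0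

lemma intChoose_eq_zero {a b : ℤ} (h : b < 0 ∨ a < b) : intChoose a b = 0 := by
  unfold intChoose
  split_ifs with hc
  · omega
  · rfl

lemma intChoose_eq_choose {a b : ℤ} (ha : 0 ≤ a) (hb : 0 ≤ b) :
    intChoose a b = a.toNat.choose b.toNat := by
  unfold intChoose
  split_ifs with hc
  · rfl
  · exact (Nat.choose_eq_zero_of_lt (by omega)).symm

lemma intChoose_pascal (a b : ℤ) :
    (intChoose a b : ℤ) = intChoose (a-1) b + intChoose (a-1) (b-1)
      + (if a = 0 ∧ b = 0 then 1 else 0) := by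
  rcases lt_trichotomy a 0 with ha | ha | ha
  · rw [intChoose_eq_zero (show b < 0 ∨ a < b by omega),
      intChoose_eq_zero (show b < 0 ∨ a - 1 < b by omega),
      intChoose_eq_zero (show b - 1 < 0 ∨ a - 1 < b - 1 by omega),
      if_neg (by omega)]
    simp
  · subst ha
    by_cases hb : b = 0
    · subst hb
      rw [intChoose_eq_choose le_rfl le_rfl,
        intChoose_eq_zero (show (0:ℤ) < 0 ∨ (0:ℤ) - 1 < 0 by omega),
        intChoose_eq_zero (show (0:ℤ) - 1 < 0 ∨ (0:ℤ) - 1 < 0 - 1 by omega),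
        if_pos ⟨rfl, rfl⟩]
      simp
    · rw [intChoose_eq_zero (show b < 0 ∨ (0:ℤ) < b by omega),
        intChoose_eq_zero (show b < 0 ∨ (0:ℤ) - 1 < b by omega),
        intChoose_eq_zero (show b - 1 < 0 ∨ (0:ℤ) - 1 < b - 1 by omega),
        if_neg (by omega)]
      simp
  · rcases lt_trichotomy b 0 with hb | hb | hb
    · rw [intChoose_eq_zero (Or.inl hb), intChoose_eq_zero (Or.inl hb),
        intChoose_eq_zero (Or.inl (by omega)), if_neg (by omega)]
      simp
    · subst hb
      rw [intChoose_eq_choose (by omega) le_rfl,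
        intChoose_eq_choose (by omega) le_rfl,
        intChoose_eq_zero (show (0:ℤ) - 1 < 0 ∨ a - 1 < 0 - 1 by omega),
        if_neg (by omega)]
      simp
    · rw [intChoose_eq_choose (by omega) (by omega),
        intChoose_eq_choose (by omega) (by omega),
        intChoose_eq_choose (by omega) (by omega),
        if_neg (by omega)]
      have h1 : a.toNat = (a-1).toNat + 1 := by omega
      have h2 : b.toNat = (b-1).toNat + 1 := by omega
      rw [h1, h2, Nat.choose_succ_succ']
      push_cast
      ring

/-- Auxiliary: the double sum as a function of integer arguments. -/
noncomputable def Faux (S : ℕ → ℕ → ℤ) (g h : ℤ) : ℤ :=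
  ∑' x : ℕ, ∑' y : ℕ, (intChoose ((y : ℤ) - h) (g - x) : ℤ) * S x y

lemma Faux_eq_sum (S : ℕ → ℕ → ℤ) (hS : ∀ g h : ℕ, (h : ℤ) > g + 1 → S g h = 0)
    (g h : ℤ) (N : ℕ) (hN : g + 2 ≤ N) :
    Faux S g h = ∑ x ∈ Finset.range N, ∑ y ∈ Finset.range N,
      (intChoose ((y : ℤ) - h) (g - x) : ℤ) * S x y := by
  have key : ∀ x y : ℕ, N ≤ y → (intChoose ((y : ℤ) - h) (g - x) : ℤ) * S x y = 0 := by
    intro x y hy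
    by_cases hx : (x : ℤ) ≤ g
    · rw [hS x y (by omega), mul_zero]
    · rw [intChoose_eq_zero (show (g:ℤ) - x < 0 ∨ (y:ℤ) - h < g - x by omega)]
      simp
  unfold Faux
  rw [tsum_eq_sum (s := Finset.range N)]
  · apply Finset.sum_congr rfl
    intro x _
    rw [tsum_eq_sum (s := Finset.range N)]
    intro y hy
    exact key x y (by simpa using hy)
  · intro x hx
    have hx' : ¬ (x : ℤ) ≤ g := by
      simp only [Finset.mem_range, not_lt] at hx
      omega
    calc ∑' y : ℕ, (intChoose ((y : ℤ) - h) (g - x) : ℤ) * S x y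
        = ∑' _ : ℕ, (0:ℤ) := by
          apply tsum_congr
          intro y
          rw [intChoose_eq_zero (show (g:ℤ) - x < 0 ∨ (y:ℤ) - h < g - x by omega)]
          simp
      _ = 0 := tsum_zero

lemma Faux_boundary (S : ℕ → ℕ → ℤ) (hS : ∀ g h : ℕ, (h : ℤ) > g + 1 → S g h = 0)
    (g h : ℤ) (hcond : g < 0 ∨ g + 1 < h) : Faux S g h = 0 := by
  rw [Faux_eq_sum S hS g h (g.toNat + 2) (by omega)]
  apply Finset.sum_eq_zero
  intro x _
  apply Finset.sum_eq_zero
  intro y _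
  by_cases hx : (x : ℤ) ≤ g
  · rcases hcond with hg | hh
    · omega
    · by_cases hy : (y : ℤ) ≤ x + 1
      · rw [intChoose_eq_zero (show (g:ℤ) - x < 0 ∨ (y:ℤ) - h < g - x by omega)]
        simp
      · rw [hS x y (by omega), mul_zero]
  · rw [intChoose_eq_zero (show (g:ℤ) - x < 0 ∨ (y:ℤ) - h < g - x by omega)]
    simp

lemma Faux_step (S : ℕ → ℕ → ℤ) (hS : ∀ g h : ℕ, (h : ℤ) > g + 1 → S g h = 0)
    (g h : ℤ) (hg : 0 ≤ g) (hh : 0 ≤ h) :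
    Faux S g h = Faux S g (h + 1) + Faux S (g - 1) (h + 1) + S g.toNat h.toNat := by
  set N : ℕ := g.toNat + h.toNat + 2 with hNdef
  rw [Faux_eq_sum S hS g h N (by omega),
    Faux_eq_sum S hS g (h+1) N (by omega),
    Faux_eq_sum S hS (g-1) (h+1) N (by omega)]
  have delta : ∑ x ∈ Finset.range N, ∑ y ∈ Finset.range N,
      (if (y : ℤ) - h = 0 ∧ g - x = 0 then (1:ℤ) else 0) * S x y = S g.toNat h.toNat := by
    have hiff : ∀ x y : ℕ, ((y : ℤ) - h = 0 ∧ g - (x:ℤ) = 0) ↔ (x = g.toNat ∧ y = h.toNat) := by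
      intro x y; omega
    simp only [ite_mul, one_mul, zero_mul, hiff, ite_and]
    have inner : ∀ x ∈ Finset.range N,
        (∑ y ∈ Finset.range N, if x = g.toNat then if y = h.toNat then S x y else 0 else 0)
          = if x = g.toNat then S x h.toNat else 0 := by
      intro x _
      split_ifs with hx
      · rw [Finset.sum_ite_eq' (Finset.range N) h.toNat (fun y => S x y)]
        rw [if_pos (by simp [Finset.mem_range]; omega)]
      · simp
    rw [Finset.sum_congr rfl inner,
      Finset.sum_ite_eq' (Finset.range N) g.toNat (fun x => S x h.toNat)]
    rw [if_pos (by simp [Finset.mem_range]; omega)]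
  rw [← delta]
  have term : ∀ x ∈ Finset.range N, ∀ y ∈ Finset.range N,
      (intChoose ((y : ℤ) - h) (g - x) : ℤ) * S x y
        = (intChoose ((y : ℤ) - (h+1)) (g - x) : ℤ) * S x y
          + (intChoose ((y : ℤ) - (h+1)) (g - 1 - x) : ℤ) * S x y
          + (if (y : ℤ) - h = 0 ∧ g - x = 0 then (1:ℤ) else 0) * S x y := by
    intro x _ y _
    have e1 : (y : ℤ) - (h+1) = ((y:ℤ) - h) - 1 := by ring
    have e2 : (g : ℤ) - 1 - x = (g - x) - 1 := by ring
    rw [e1, e2, intChoose_pascal ((y:ℤ) - h) (g - x), add_mul, add_mul]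
  calc ∑ x ∈ Finset.range N, ∑ y ∈ Finset.range N,
        (intChoose ((y : ℤ) - h) (g - x) : ℤ) * S x y
      = ∑ x ∈ Finset.range N, ∑ y ∈ Finset.range N,
        ((intChoose ((y : ℤ) - (h+1)) (g - x) : ℤ) * S x y
          + (intChoose ((y : ℤ) - (h+1)) (g - 1 - x) : ℤ) * S x y
          + (if (y : ℤ) - h = 0 ∧ g - x = 0 then (1:ℤ) else 0) * S x y) := by
        apply Finset.sum_congr rfl
        intro x hx
        exact Finset.sum_congr rfl (fun y hy => term x hx y hy)
    _ = _ := by simp [Finset.sum_add_distrib]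

theorem T_eq_sum_intChoose (S : ℕ → ℕ → ℤ)
    (hS : ∀ g h : ℕ, (h : ℤ) > g + 1 → S g h = 0)
    (T : ℤ → ℤ → ℤ)
    (hT0 : ∀ g h : ℤ, h > g + 1 → T g h = 0)
    (hTrec : ∀ g h : ℤ, 0 ≤ g → 0 ≤ h →
      T g h = T g (h + 1) + T (g - 1) (h + 1) + S g.toNat h.toNat) :
    ∀ g h : ℕ, T g h = ∑' x : ℕ, ∑' y : ℕ,
      (intChoose ((y : ℤ) - h) ((g : ℤ) - x) : ℤ) * S x y := by
  have main : ∀ n : ℕ, ∀ g h : ℤ, 0 ≤ g → 0 ≤ h → (g + 2 - h).toNat = n →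
      T g h = Faux S g h := by
    intro n
    induction n using Nat.strong_induction_on with
    | _ n ih =>
      intro g h hg hh hn
      by_cases hb : g + 1 < h
      · rw [hT0 g h hb, Faux_boundary S hS g h (Or.inr hb)]
      · have hn1 : 1 ≤ n := by omega
        rw [hTrec g h hg hh]
        have e1 : T g (h+1) = Faux S g (h+1) :=
          ih ((g + 2 - (h+1)).toNat) (by omega) g (h+1) hg (by omega) rfl
        have e2 : T (g-1) (h+1) = Faux S (g-1) (h+1) := by
          by_cases hg1 : 1 ≤ g
          · exact ih ((g - 1 + 2 - (h+1)).toNat) (by omega) (g-1) (h+1) (by omega) (by omega) rfl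
          · rw [hT0 (g-1) (h+1) (by omega), Faux_boundary S hS (g-1) (h+1) (Or.inl (by omega))]
        rw [e1, e2, ← Faux_step S hS g h hg hh]
  intro g h
  exact main ((g + 2 - h : ℤ)).toNat g h (by positivity) (by positivity) rfl
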